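/- Let 0 < ρ < 1 and let α ∈ (0,1) be the unique solution of x^x (1−x)^{1−x} = ρ^x. Then H_N/N → α in probability as N → ∞; that is, for every ε > 0, ∑_{k ∈ {1,…,N}, |k/N − α| ≥ ε} P(H_N = k) → 0 as N → ∞. -/

import Mathlib

open Finset Filter Real Topology

/-- `r_{ρ,n}(i) = ρ^{-i} * C(n-1, i)^{-1}`. -/
noncomputable def rfun (ρ : ℝ) (n i : ℕ) : ℝ := (ρ ^ i * (Nat.choose (n - 1) i : ℝ))⁻¹

/-- `P(H_N ≥ k)` for `k = 1,…,N`, and `0` for `k > N`. -/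
noncomputable def tailP (ρ : ℝ) (N k : ℕ) : ℝ :=
  if k ≤ N then (∑ i ∈ Finset.range k, rfun ρ N i)⁻¹ else 0

/-- `P(H_N = k) = P(H_N ≥ k) − P(H_N ≥ k+1)`. -/
noncomputable def pmfP (ρ : ℝ) (N k : ℕ) : ℝ := tailP ρ N k - tailP ρ N (k + 1)

/-- `E(H_N) = ∑_{k=1}^N P(H_N ≥ k)`. -/
noncomputable def EH (ρ : ℝ) (N : ℕ) : ℝ := ∑ k ∈ Finset.Icc 1 N, tailP ρ N k

/-- `Var(H_N) = ∑_{k=1}^N (k − E(H_N))² P(H_N = k)`. -/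
noncomputable def VarH (ρ : ℝ) (N : ℕ) : ℝ :=
  ∑ k ∈ Finset.Icc 1 N, ((k : ℝ) - EH ρ N) ^ 2 * pmfP ρ N k

/-- `P(H_N ≤ t)` for a real threshold `t`. -/
noncomputable def cdfP (ρ : ℝ) (N : ℕ) (t : ℝ) : ℝ :=
  ∑ k ∈ (Finset.Icc 1 N).filter (fun k : ℕ => (k : ℝ) ≤ t), pmfP ρ N k


private def T (n k j : ℕ) : ℕ := Nat.choose n j * k ^ j * (n - k) ^ (n - j)

lemma T_step_up {n k j : ℕ} (h1 : j < k) (h2 : k ≤ n) : T n k j ≤ T n k (j + 1) := by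
  have hjn : j < n := lt_of_lt_of_le h1 h2
  have hsub : n - j = (n - (j + 1)) + 1 := by omega
  refine Nat.le_of_mul_le_mul_right ?_ (Nat.succ_pos j)
  have hrec : Nat.choose n (j+1) * (j+1) = Nat.choose n j * (n - j) :=
    Nat.choose_succ_right_eq n j
  calc T n k j * (j + 1)
      = Nat.choose n j * k ^ j * ((n - k) ^ (n - (j+1)) * ((n - k) * (j + 1))) := by
        rw [T, hsub]; ring
    _ ≤ Nat.choose n j * k ^ j * ((n - k) ^ (n - (j+1)) * ((n - j) * k)) := by
        apply Nat.mul_le_mul_left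
        apply Nat.mul_le_mul_left
        exact Nat.mul_le_mul (by omega) h1
    _ = (Nat.choose n j * (n - j)) * (k ^ (j+1) * (n - k) ^ (n - (j+1))) := by ring
    _ = (Nat.choose n (j+1) * (j+1)) * (k ^ (j+1) * (n - k) ^ (n - (j+1))) := by rw [hrec]
    _ = T n k (j + 1) * (j + 1) := by rw [T]; ring

lemma T_step_down {n k j : ℕ} (h1 : k ≤ j) (h2 : j < n) : T n k (j + 1) ≤ T n k j := by
  have hsub : n - j = (n - (j + 1)) + 1 := by omega
  refine Nat.le_of_mul_le_mul_right ?_ (Nat.succ_pos j)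
  have hrec : Nat.choose n (j+1) * (j+1) = Nat.choose n j * (n - j) :=
    Nat.choose_succ_right_eq n j
  calc T n k (j+1) * (j + 1)
      = (Nat.choose n (j+1) * (j+1)) * (k ^ (j+1) * (n - k) ^ (n - (j+1))) := by rw [T]; ring
    _ = (Nat.choose n j * (n - j)) * (k ^ (j+1) * (n - k) ^ (n - (j+1))) := by rw [hrec]
    _ = Nat.choose n j * k ^ j * ((n - k) ^ (n - (j+1)) * ((n - j) * k)) := by ring
    _ ≤ Nat.choose n j * k ^ j * ((n - k) ^ (n - (j+1)) * ((n - k) * (j + 1))) := by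
        apply Nat.mul_le_mul_left
        apply Nat.mul_le_mul_left
        exact Nat.mul_le_mul (by omega) (by omega)
    _ = T n k j * (j + 1) := by rw [T, hsub]; ring

lemma T_le_T_self {n k j : ℕ} (hk : k ≤ n) (hj : j ≤ n) : T n k j ≤ T n k k := by
  rcases le_or_gt j k with h | h
  · have : ∀ d, d ≤ k → T n k (k - d) ≤ T n k k := by
      intro d
      induction d with
      | zero => simp
      | succ d ih =>
        intro hd
        have e : k - (d+1) + 1 = k - d := by omega
        calc T n k (k - (d+1)) ≤ T n k (k - (d+1) + 1) :=
              T_step_up (by omega) hk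
          _ ≤ T n k k := by rw [e]; exact ih (by omega)
    have := this (k - j) (by omega)
    rwa [Nat.sub_sub_self h] at this
  · have : ∀ d, k + d ≤ n → T n k (k + d) ≤ T n k k := by
      intro d
      induction d with
      | zero => simp
      | succ d ih =>
        intro hd
        calc T n k (k + (d+1)) = T n k ((k + d) + 1) := by ring_nf
          _ ≤ T n k (k + d) := T_step_down (by omega) (by omega)
          _ ≤ T n k k := ih (by omega)
    have := this (j - k) (by omega)
    rwa [Nat.add_sub_cancel' (le_of_lt h)] at this

lemma pow_eq_sum_T (n k : ℕ) (hk : k ≤ n) :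
    n ^ n = ∑ j ∈ Finset.range (n + 1), T n k j := by
  have h := add_pow k (n - k) n
  rw [Nat.add_sub_cancel' hk] at h
  rw [h]
  apply Finset.sum_congr rfl
  intro j _
  rw [T]; push_cast; ring

lemma pow_le_choose_term (n k : ℕ) (hk : k ≤ n) :
    n ^ n ≤ (n + 1) * (Nat.choose n k * k ^ k * (n - k) ^ (n - k)) := by
  rw [pow_eq_sum_T n k hk]
  calc ∑ j ∈ Finset.range (n + 1), T n k j
      ≤ (Finset.range (n+1)).card • T n k k := by
        apply Finset.sum_le_card_nsmul
        intro j hj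
        exact T_le_T_self hk (by simpa using Nat.lt_succ_iff.mp (Finset.mem_range.mp hj))
    _ = (n + 1) * (Nat.choose n k * k ^ k * (n - k) ^ (n - k)) := by
        simp [T, Finset.card_range]

lemma choose_term_le_pow (n k : ℕ) (hk : k ≤ n) :
    Nat.choose n k * k ^ k * (n - k) ^ (n - k) ≤ n ^ n := by
  rw [pow_eq_sum_T n k hk]
  have : T n k k = Nat.choose n k * k ^ k * (n - k) ^ (n - k) := by simp [T]
  rw [← this]
  exact Finset.single_le_sum (fun i _ => Nat.zero_le _) (by simp [Nat.lt_succ_iff, hk])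

noncomputable def fent (ρ x : ℝ) : ℝ :=
  x * Real.log x + (1 - x) * Real.log (1 - x) - x * Real.log ρ

lemma fent_zero (ρ : ℝ) : fent ρ 0 = 0 := by simp [fent]

lemma fent_one (ρ : ℝ) : fent ρ 1 = -Real.log ρ := by simp [fent]

lemma fent_strictConvexOn (ρ : ℝ) : StrictConvexOn ℝ (Set.Icc (0:ℝ) 1) (fent ρ) := by
  have hmul := Real.strictConvexOn_mul_log
  constructor
  · exact convex_Icc 0 1
  · intro x hx y hy hxy a b ha hb hab
    simp only [smul_eq_mul] at *
    have hx0 : (0:ℝ) ≤ x := hx.1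
    have hy0 : (0:ℝ) ≤ y := hy.1
    have h1 : (a*x + b*y) * Real.log (a*x + b*y)
        < a * (x * Real.log x) + b * (y * Real.log y) := by
      have := hmul.2 (Set.mem_Ici.mpr hx0) (Set.mem_Ici.mpr hy0) hxy ha hb hab
      simpa using this
    have h2 : (1 - (a*x + b*y)) * Real.log (1 - (a*x + b*y))
        ≤ a * ((1-x) * Real.log (1-x)) + b * ((1-y) * Real.log (1-y)) := by
      have hmem1 : (1 - x) ∈ Set.Ici (0:ℝ) := by simp; linarith [hx.2]
      have hmem2 : (1 - y) ∈ Set.Ici (0:ℝ) := by simp; linarith [hy.2]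
      have := hmul.convexOn.2 hmem1 hmem2 ha.le hb.le hab
      simp only [smul_eq_mul] at this
      have e : 1 - (a*x + b*y) = a * (1-x) + b * (1-y) := by
        have : a + b = 1 := hab; nlinarith
      rw [e]; exact this
    have h3 : (a*x + b*y) * Real.log ρ = a * (x * Real.log ρ) + b * (y * Real.log ρ) := by
      ring
    simp only [fent]
    nlinarith

lemma fent_alpha {ρ α : ℝ} (hρ0 : 0 < ρ) (hα1 : 0 < α) (hα2 : α < 1)
    (hsol : α ^ α * (1 - α) ^ (1 - α) = ρ ^ α) : fent ρ α = 0 := by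
  have h := congrArg Real.log hsol
  rw [Real.log_mul (ne_of_gt (Real.rpow_pos_of_pos hα1 _))
      (ne_of_gt (Real.rpow_pos_of_pos (by linarith) _)),
    Real.log_rpow hα1, Real.log_rpow (by linarith : (0:ℝ) < 1 - α),
    Real.log_rpow hρ0] at h
  simp only [fent]
  linarith

lemma fent_neg {ρ α : ℝ} (hα1 : 0 < α) (hα2 : α < 1) (hfα : fent ρ α = 0)
    {x : ℝ} (hx1 : 0 < x) (hx2 : x < α) : fent ρ x < 0 := by
  set t := x / α with ht
  have ht1 : 0 < t := div_pos hx1 hα1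
  have ht2 : t < 1 := (div_lt_one hα1).mpr hx2
  have h := (fent_strictConvexOn ρ).2 (Set.mem_Icc.mpr ⟨le_refl 0, by norm_num⟩)
    (Set.mem_Icc.mpr ⟨hα1.le, hα2.le⟩) (ne_of_lt hα1) (by linarith : 0 < 1 - t) ht1
    (by ring)
  simp only [smul_eq_mul, mul_zero, zero_add, fent_zero] at h
  have e : t * α = x := by rw [ht]; exact div_mul_cancel₀ x hα1.ne'
  rw [e, hfα] at h
  linarith

lemma fent_pos {ρ α : ℝ} (hα1 : 0 < α) (hfα : fent ρ α = 0)
    {x : ℝ} (hx1 : α < x) (hx2 : x ≤ 1) : 0 < fent ρ x := by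
  have hx0 : 0 < x := lt_trans hα1 hx1
  set s := α / x with hs
  have hs1 : 0 < s := div_pos hα1 hx0
  have hs2 : s < 1 := (div_lt_one hx0).mpr hx1
  have h := (fent_strictConvexOn ρ).2 (Set.mem_Icc.mpr ⟨le_refl 0, by norm_num⟩)
    (Set.mem_Icc.mpr ⟨hx0.le, hx2⟩) (ne_of_lt hx0) (by linarith : 0 < 1 - s) hs1
    (by ring)
  simp only [smul_eq_mul, mul_zero, zero_add, fent_zero] at h
  have e : s * x = α := by rw [hs]; exact div_mul_cancel₀ α hx0.ne'
  rw [e, hfα] at h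
  nlinarith

lemma fent_le_max {ρ : ℝ} {p q x : ℝ} (hp : 0 ≤ p) (h1 : p ≤ x) (h2 : x ≤ q)
    (hq : q ≤ 1) : fent ρ x ≤ max (fent ρ p) (fent ρ q) := by
  rcases eq_or_lt_of_le (le_trans h1 h2) with he | hlt
  · have : x = p := le_antisymm (he ▸ h2) h1
    rw [this]; exact le_max_left _ _
  · set t := (x - p) / (q - p) with ht
    have hd : 0 < q - p := by linarith
    have ht1 : 0 ≤ t := div_nonneg (by linarith) hd.le
    have ht2 : t ≤ 1 := (div_le_one hd).mpr (by linarith)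
    have h := (fent_strictConvexOn ρ).convexOn.2 (Set.mem_Icc.mpr ⟨hp, by linarith⟩)
      (Set.mem_Icc.mpr ⟨by linarith, hq⟩) (by linarith : (0:ℝ) ≤ 1 - t) ht1 (by ring)
    simp only [smul_eq_mul] at h
    have e : (1 - t) * p + t * q = x := by
      have h' := div_mul_cancel₀ (x - p) hd.ne'; rw [← ht] at h'; linear_combination h'
    rw [e] at h
    have hmp := le_max_left (fent ρ p) (fent ρ q)
    have hmq := le_max_right (fent ρ p) (fent ρ q)
    nlinarith

lemma fent_right_mono {ρ α : ℝ} (hα1 : 0 < α) (hfα : fent ρ α = 0)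
    {w x : ℝ} (hw : α < w) (hwx : w ≤ x) (hx : x ≤ 1) : fent ρ w ≤ fent ρ x := by
  rcases eq_or_lt_of_le hwx with he | hlt
  · rw [he]
  · have hfx : 0 < fent ρ x := fent_pos hα1 hfα (lt_of_lt_of_le hw hwx) hx
    set t := (w - α) / (x - α) with ht
    have hd : 0 < x - α := by linarith
    have ht1 : 0 < t := div_pos (by linarith) hd
    have ht2 : t < 1 := (div_lt_one hd).mpr (by linarith)
    have h := (fent_strictConvexOn ρ).convexOn.2
      (Set.mem_Icc.mpr ⟨hα1.le, by linarith⟩)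
      (Set.mem_Icc.mpr ⟨by linarith, hx⟩) (by linarith : (0:ℝ) ≤ 1 - t) ht1.le (by ring)
    simp only [smul_eq_mul] at h
    have e : (1 - t) * α + t * x = w := by
      have h' := div_mul_cancel₀ (w - α) hd.ne'; rw [← ht] at h'; linear_combination h'
    rw [e, hfα] at h
    nlinarith



lemma exp_nat_mul_log (t : ℝ) (k : ℕ) (h : 0 < t ∨ k = 0) :
    Real.exp (k * Real.log t) = t ^ k := by
  rcases h with h | h
  · rw [Real.exp_nat_mul, Real.exp_log h]
  · simp [h]

lemma fent_exp_eq {ρ : ℝ} (hρ0 : 0 < ρ) {n j : ℕ} (hjn : j ≤ n) (hn : 0 < n) :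
    Real.exp ((n:ℝ) * fent ρ ((j:ℝ)/(n:ℝ)))
      = (j:ℝ)^j * ((n-j:ℕ):ℝ)^(n-j) / ((n:ℝ)^n * ρ^j) := by
  have hn0 : (0:ℝ) < (n:ℝ) := by exact_mod_cast hn
  have hcast : ((n-j:ℕ):ℝ) = (n:ℝ) - (j:ℝ) := by
    push_cast [Nat.cast_sub hjn]; ring
  have hx1 : 1 - (j:ℝ)/(n:ℝ) = ((n-j:ℕ):ℝ)/(n:ℝ) := by
    rw [hcast]; field_simp
  have harg : (n:ℝ) * fent ρ ((j:ℝ)/(n:ℝ))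
      = (j:ℝ) * Real.log ((j:ℝ)/(n:ℝ))
        + ((n-j:ℕ):ℝ) * Real.log (((n-j:ℕ):ℝ)/(n:ℝ)) - (j:ℝ) * Real.log ρ := by
    rw [fent, hx1]
    have h1 : (n:ℝ) * ((j:ℝ)/(n:ℝ)) = (j:ℝ) := by field_simp
    have h2 : (n:ℝ) * (((n-j:ℕ):ℝ)/(n:ℝ)) = ((n-j:ℕ):ℝ) := by field_simp
    have h3 : 1 - (j:ℝ)/(n:ℝ) = ((n-j:ℕ):ℝ)/(n:ℝ) := hx1
    calc (n:ℝ) * ((j:ℝ)/(n:ℝ) * Real.log ((j:ℝ)/(n:ℝ))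
          + ((n-j:ℕ):ℝ)/(n:ℝ) * Real.log (((n-j:ℕ):ℝ)/(n:ℝ))
          - (j:ℝ)/(n:ℝ) * Real.log ρ)
        = ((n:ℝ) * ((j:ℝ)/(n:ℝ))) * Real.log ((j:ℝ)/(n:ℝ))
          + ((n:ℝ) * (((n-j:ℕ):ℝ)/(n:ℝ))) * Real.log (((n-j:ℕ):ℝ)/(n:ℝ))
          - ((n:ℝ) * ((j:ℝ)/(n:ℝ))) * Real.log ρ := by ring
      _ = _ := by rw [h1, h2]
  rw [harg, sub_eq_add_neg, Real.exp_add, Real.exp_add]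
  have e1 : Real.exp ((j:ℝ) * Real.log ((j:ℝ)/(n:ℝ))) = ((j:ℝ)/(n:ℝ))^j := by
    apply exp_nat_mul_log
    rcases Nat.eq_zero_or_pos j with h | h
    · right; exact h
    · left; positivity
  have e2 : Real.exp (((n-j:ℕ):ℝ) * Real.log (((n-j:ℕ):ℝ)/(n:ℝ)))
      = (((n-j:ℕ):ℝ)/(n:ℝ))^(n-j) := by
    apply exp_nat_mul_log
    rcases Nat.eq_zero_or_pos (n-j) with h | h
    · right; exact h
    · left
      have : (0:ℝ) < ((n-j:ℕ):ℝ) := by exact_mod_cast h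
      positivity
  have e3 : Real.exp (-((j:ℝ) * Real.log ρ)) = (ρ^j)⁻¹ := by
    rw [Real.exp_neg, exp_nat_mul_log ρ j (Or.inl hρ0)]
  have hnn : (n:ℝ)^j * (n:ℝ)^(n-j) = (n:ℝ)^n := by
    rw [← pow_add, Nat.add_sub_cancel' hjn]
  rw [e1, e2, e3, div_pow, div_pow, ← hnn]
  have h1 : (n:ℝ)^j ≠ 0 := by positivity
  have h2 : (n:ℝ)^(n-j) ≠ 0 := by positivity
  have h3 : ρ^j ≠ 0 := by positivity
  field_simp

lemma rfun_nonneg {ρ : ℝ} (hρ0 : 0 < ρ) (N i : ℕ) : 0 ≤ rfun ρ N i := by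
  unfold rfun; positivity

lemma rfun_zero (ρ : ℝ) (N : ℕ) : rfun ρ N 0 = 1 := by simp [rfun]

lemma sum_rfun_ge_one {ρ : ℝ} (hρ0 : 0 < ρ) (N k : ℕ) (hk : 1 ≤ k) :
    1 ≤ ∑ i ∈ Finset.range k, rfun ρ N i := by
  calc (1:ℝ) = rfun ρ N 0 := (rfun_zero ρ N).symm
    _ ≤ ∑ i ∈ Finset.range k, rfun ρ N i :=
      Finset.single_le_sum (fun i _ => rfun_nonneg hρ0 N i)
        (Finset.mem_range.mpr (by omega))

lemma rfun_regionA {ρ : ℝ} (hρ0 : 0 < ρ) (hρ1 : ρ < 1) (n : ℕ) :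
    ∀ i : ℕ, 1 ≤ i → (i:ℝ) ≤ ρ * n / 8 →
      (ρ ^ i * (n.choose i : ℝ))⁻¹ ≤ (ρ * n)⁻¹ * (2⁻¹:ℝ)^(i-1) := by
  intro i
  induction i with
  | zero => intro h; omega
  | succ i ih =>
    intro _ hle
    have hle' : (i:ℝ) + 1 ≤ ρ * n / 8 := by push_cast at hle; linarith
    have hρn : 8 * ((i:ℝ) + 1) ≤ ρ * n := by linarith
    have hn0 : (0:ℝ) < n := by nlinarith
    have hin : i + 1 ≤ n := by
      have : (i:ℝ) + 1 ≤ (n:ℝ) := by nlinarith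
      exact_mod_cast this
    rcases Nat.eq_zero_or_pos i with hi0 | hi1
    · subst hi0
      norm_num [Nat.choose_one_right]
    · -- inductive step
      have hprev := ih hi1 (by linarith)
      have hCi : (0:ℝ) < (n.choose i : ℝ) := by
        exact_mod_cast Nat.choose_pos (by omega : i ≤ n)
      have hCs : (0:ℝ) < (n.choose (i+1) : ℝ) := by
        exact_mod_cast Nat.choose_pos hin
      have hrec : (n.choose (i+1) : ℝ) * ((i:ℝ)+1) = (n.choose i : ℝ) * ((n - i:ℕ):ℝ) := by
        exact_mod_cast Nat.choose_succ_right_eq n i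
      have hsubcast : ((n - i:ℕ):ℝ) = (n:ℝ) - (i:ℝ) := by
        push_cast [Nat.cast_sub (by omega : i ≤ n)]; ring
      have hρi : ρ * (i:ℝ) ≤ (i:ℝ) := by nlinarith
      have hkey : 2 * ((i:ℝ)+1) ≤ ρ * ((n:ℝ) - (i:ℝ)) := by nlinarith
      have hstep : 2 * (n.choose i : ℝ) ≤ ρ * (n.choose (i+1) : ℝ) := by
        rw [hsubcast] at hrec
        nlinarith [mul_pos hCi (by linarith : (0:ℝ) < (i:ℝ)+1)]
      have hA : (0:ℝ) < ρ ^ i * (n.choose i : ℝ) := by positivity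
      have hB : 2 * (ρ ^ i * (n.choose i : ℝ)) ≤ ρ ^ (i+1) * (n.choose (i+1) : ℝ) := by
        rw [pow_succ]
        calc 2 * (ρ ^ i * (n.choose i : ℝ)) = ρ ^ i * (2 * (n.choose i : ℝ)) := by ring
          _ ≤ ρ ^ i * (ρ * (n.choose (i+1) : ℝ)) := by
              apply mul_le_mul_of_nonneg_left hstep (by positivity)
          _ = ρ ^ i * ρ * (n.choose (i+1) : ℝ) := by ring
      have hinv : (ρ ^ (i+1) * (n.choose (i+1) : ℝ))⁻¹ ≤ (2 * (ρ ^ i * (n.choose i : ℝ)))⁻¹ := by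
        apply inv_anti₀ (by positivity) hB
      calc (ρ ^ (i+1) * (n.choose (i+1) : ℝ))⁻¹
          ≤ (2 * (ρ ^ i * (n.choose i : ℝ)))⁻¹ := hinv
        _ = (ρ ^ i * (n.choose i : ℝ))⁻¹ * 2⁻¹ := by rw [mul_inv]; ring
        _ ≤ (ρ * n)⁻¹ * (2⁻¹:ℝ)^(i-1) * 2⁻¹ := by
            apply mul_le_mul_of_nonneg_right hprev (by norm_num)
        _ = (ρ * n)⁻¹ * (2⁻¹:ℝ)^(i+1-1) := by
            rw [mul_assoc, ← pow_succ]
            congr 2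
            omega

lemma rfun_regionB {ρ : ℝ} (hρ0 : 0 < ρ) {n m : ℕ} (hm0 : 0 < m) (hmn : m < n) :
    (ρ ^ m * (n.choose m : ℝ))⁻¹ ≤ ((n:ℝ)+1) * Real.exp ((n:ℝ) * fent ρ ((m:ℝ)/(n:ℝ))) := by
  have hn : 0 < n := lt_trans hm0 hmn
  rw [fent_exp_eq hρ0 hmn.le hn]
  have key : ((n:ℝ))^n ≤ ((n:ℝ)+1) * ((n.choose m : ℝ) * (m:ℝ)^m * ((n-m:ℕ):ℝ)^(n-m)) := by
    exact_mod_cast pow_le_choose_term n m hmn.le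
  have hC : (0:ℝ) < (n.choose m : ℝ) := by exact_mod_cast Nat.choose_pos hmn.le
  have hd1 : (0:ℝ) < ρ ^ m * (n.choose m : ℝ) := by positivity
  have hd2 : (0:ℝ) < (n:ℝ)^n * ρ^m := by
    have : (0:ℝ) < (n:ℝ) := by exact_mod_cast hn
    positivity
  rw [mul_div_assoc', inv_eq_one_div, div_le_div_iff₀ hd1 hd2]
  have key2 := mul_le_mul_of_nonneg_right key (by positivity : (0:ℝ) ≤ ρ^m)
  calc 1 * ((n:ℝ)^n * ρ^m) = (n:ℝ)^n * ρ^m := by ring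
    _ ≤ (((n:ℝ)+1) * ((n.choose m : ℝ) * (m:ℝ)^m * ((n-m:ℕ):ℝ)^(n-m))) * ρ^m := key2
    _ = ((n:ℝ)+1) * ((m:ℝ)^m * ((n-m:ℕ):ℝ)^(n-m)) * (ρ ^ m * (n.choose m : ℝ)) := by ring

lemma rfun_upper {ρ : ℝ} (hρ0 : 0 < ρ) {n j : ℕ} (hjn : j ≤ n) (hn : 0 < n) :
    Real.exp ((n:ℝ) * fent ρ ((j:ℝ)/(n:ℝ))) ≤ (ρ ^ j * (n.choose j : ℝ))⁻¹ := by
  rw [fent_exp_eq hρ0 hjn hn]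
  have key : ((n.choose j : ℝ) * (j:ℝ)^j * ((n-j:ℕ):ℝ)^(n-j)) ≤ ((n:ℝ))^n := by
    exact_mod_cast choose_term_le_pow n j hjn
  have hC : (0:ℝ) < (n.choose j : ℝ) := by exact_mod_cast Nat.choose_pos hjn
  have hd1 : (0:ℝ) < ρ ^ j * (n.choose j : ℝ) := by positivity
  have hd2 : (0:ℝ) < (n:ℝ)^n * ρ^j := by
    have : (0:ℝ) < (n:ℝ) := by exact_mod_cast hn
    positivity
  rw [inv_eq_one_div, div_le_div_iff₀ hd2 hd1]
  have key2 := mul_le_mul_of_nonneg_right key (by positivity : (0:ℝ) ≤ ρ^j)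
  calc (j:ℝ)^j * ((n-j:ℕ):ℝ)^(n-j) * (ρ ^ j * (n.choose j : ℝ))
      = ((n.choose j : ℝ) * (j:ℝ)^j * ((n-j:ℕ):ℝ)^(n-j)) * ρ^j := by ring
    _ ≤ (n:ℝ)^n * ρ^j := key2
    _ = 1 * ((n:ℝ)^n * ρ^j) := by ring

lemma pmf_nonneg {ρ : ℝ} (hρ0 : 0 < ρ) {N k : ℕ} (hk : 1 ≤ k) : 0 ≤ pmfP ρ N k := by
  unfold pmfP tailP
  rcases le_or_gt (k+1) N with h | h
  · rw [if_pos (by omega), if_pos h]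
    have h1 : (1:ℝ) ≤ ∑ i ∈ Finset.range k, rfun ρ N i := sum_rfun_ge_one hρ0 N k hk
    have h2 : ∑ i ∈ Finset.range k, rfun ρ N i ≤ ∑ i ∈ Finset.range (k+1), rfun ρ N i := by
      rw [Finset.sum_range_succ]
      have := rfun_nonneg hρ0 N k
      linarith
    have := inv_anti₀ (by linarith : (0:ℝ) < ∑ i ∈ Finset.range k, rfun ρ N i) h2
    linarith
  · rcases le_or_gt k N with h' | h'
    · rw [if_pos h', if_neg (by omega)]
      have h1 : (0:ℝ) ≤ ∑ i ∈ Finset.range k, rfun ρ N i :=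
        Finset.sum_nonneg (fun i _ => rfun_nonneg hρ0 N i)
      simp
      positivity
    · rw [if_neg (by omega), if_neg (by omega)]
      simp

lemma sum_telescope_Icc (g : ℕ → ℝ) (a : ℕ) :
    ∀ b : ℕ, a ≤ b + 1 → ∑ k ∈ Finset.Icc a b, (g k - g (k+1)) = g a - g (b+1) := by
  intro b
  induction b with
  | zero =>
    intro h
    interval_cases a
    · simp
    · simp
  | succ b ih =>
    intro h
    rcases le_or_gt a (b+1) with h' | h'
    · rw [← Finset.Ico_add_one_right_eq_Icc, Finset.sum_Ico_succ_top (by omega), Finset.Ico_add_one_right_eq_Icc, ih h']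
      ring
    · have : a = b + 2 := by omega
      subst this
      simp

set_option maxHeartbeats 2000000 in
theorem height_lln_rho_lt_one (ρ α : ℝ) (hρ0 : 0 < ρ) (hρ1 : ρ < 1)
    (hα : α ∈ Set.Ioo (0 : ℝ) 1)
    (hsol : α ^ α * (1 - α) ^ (1 - α) = ρ ^ α)
    (huniq : ∀ x ∈ Set.Ioo (0 : ℝ) 1, x ^ x * (1 - x) ^ (1 - x) = ρ ^ x → x = α) :
    ∀ ε > (0 : ℝ),
      Tendsto
        (fun N : ℕ =>
          ∑ k ∈ (Finset.Icc 1 N).filter (fun k : ℕ => ε ≤ |(k : ℝ) / N - α|), pmfP ρ N k)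
        atTop (𝓝 0) := by
  obtain ⟨hα1, hα2⟩ := hα
  have main : ∀ ε'' > (0:ℝ), ε'' ≤ α/2 → ε'' ≤ (1-α)/2 →
      Tendsto
        (fun N : ℕ =>
          ∑ k ∈ (Finset.Icc 1 N).filter (fun k : ℕ => ε'' ≤ |(k : ℝ) / N - α|), pmfP ρ N k)
        atTop (𝓝 0) := by
    intro ε' hε' hεa hεb
    have hfα : fent ρ α = 0 := fent_alpha hρ0 hα1 hα2 hsol
    obtain ⟨a, ha_def⟩ : ∃ t, t = α - ε' := ⟨_, rfl⟩
    obtain ⟨b, hb_def⟩ : ∃ t, t = α + ε' := ⟨_, rfl⟩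
    have ha0 : 0 < a := by rw [ha_def]; linarith
    have haα : a < α := by rw [ha_def]; linarith
    have hbα : α < b := by rw [hb_def]; linarith
    have hb1 : b < 1 := by rw [hb_def]; linarith
    obtain ⟨δ, hδ_def⟩ : ∃ t, t = min (a/2) (ρ/8) := ⟨_, rfl⟩
    have hδ0 : 0 < δ := by rw [hδ_def]; exact lt_min (by linarith) (by linarith)
    have hδa : δ < a := by rw [hδ_def]; exact lt_of_le_of_lt (min_le_left _ _) (by linarith)
    have hδρ : δ ≤ ρ/8 := by rw [hδ_def]; exact min_le_right _ _
    obtain ⟨a2, ha2_def⟩ : ∃ t, t = (a + α)/2 := ⟨_, rfl⟩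
    have ha2α : a2 < α := by rw [ha2_def]; linarith
    have ha2a : a = a2 - ε'/2 := by rw [ha2_def, ha_def]; ring
    have ha20 : 0 < a2 := by rw [ha2_def]; linarith
    obtain ⟨b2, hb2_def⟩ : ∃ t, t = (α + b)/2 := ⟨_, rfl⟩
    have hb2α : α < b2 := by rw [hb2_def]; linarith
    have hb2b : b2 = b - ε'/2 := by rw [hb2_def, hb_def]; ring
    have hb21 : b2 < 1 := by rw [hb2_def]; linarith
    obtain ⟨c, hc_def⟩ : ∃ t, t = max (fent ρ δ) (fent ρ a2) := ⟨_, rfl⟩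
    have hc0 : c < 0 := by
      rw [hc_def]
      exact max_lt (fent_neg hα1 hα2 hfα hδ0 (lt_trans hδa haα))
        (fent_neg hα1 hα2 hfα ha20 ha2α)
    obtain ⟨K, hK_def⟩ : ∃ t, t = Real.exp c := ⟨_, rfl⟩
    have hK0 : 0 < K := by rw [hK_def]; exact Real.exp_pos c
    have hK1 : K < 1 := by rw [hK_def]; exact Real.exp_lt_one_iff.mpr hc0
    obtain ⟨c', hc'_def⟩ : ∃ t, t = fent ρ b2 := ⟨_, rfl⟩
    have hc'0 : 0 < c' := by rw [hc'_def]; exact fent_pos hα1 hfα hb2α hb21.le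
    obtain ⟨L, hL_def⟩ : ∃ t, t = Real.exp (-c') := ⟨_, rfl⟩
    have hL0 : 0 < L := by rw [hL_def]; exact Real.exp_pos _
    have hL1 : L < 1 := by rw [hL_def]; exact Real.exp_lt_one_iff.mpr (by linarith)
    obtain ⟨X, hX_def⟩ : ∃ t, t = a/(1-a) + 2*a/ε' + 2/ε' + 2/b := ⟨_, rfl⟩
    have hX1 : a/(1-a) ≤ X := by
      rw [hX_def]
      have h1 : 0 ≤ 2*a/ε' := div_nonneg (by linarith) hε'.le
      have h2 : 0 ≤ 2/ε' := div_nonneg (by norm_num) hε'.le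
      have h3 : 0 ≤ 2/b := div_nonneg (by norm_num) (by linarith)
      linarith
    have hX2 : 2*a/ε' ≤ X := by
      rw [hX_def]
      have h1 : 0 ≤ a/(1-a) := by
        apply div_nonneg ha0.le; linarith
      have h2 : 0 ≤ 2/ε' := div_nonneg (by norm_num) hε'.le
      have h3 : 0 ≤ 2/b := div_nonneg (by norm_num) (by linarith)
      linarith
    have hX3 : 2/ε' ≤ X := by
      rw [hX_def]
      have h1 : 0 ≤ a/(1-a) := by apply div_nonneg ha0.le; linarith
      have h2 : 0 ≤ 2*a/ε' := div_nonneg (by linarith) hε'.le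
      have h3 : 0 ≤ 2/b := div_nonneg (by norm_num) (by linarith)
      linarith
    have hX4 : 2/b ≤ X := by
      rw [hX_def]
      have h1 : 0 ≤ a/(1-a) := by apply div_nonneg ha0.le; linarith
      have h2 : 0 ≤ 2*a/ε' := div_nonneg (by linarith) hε'.le
      have h3 : 0 ≤ 2/ε' := div_nonneg (by norm_num) hε'.le
      linarith
    have g0 : Tendsto (fun N : ℕ =>
        2/(ρ*((N-1:ℕ):ℝ)) + (N:ℝ)*(N:ℝ)*K^(N-1) + L^(N-1)) atTop (𝓝 0) := by
      have t1 : Tendsto (fun m : ℕ => 2/(ρ*(m:ℝ))) atTop (𝓝 0) := by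
        have h := tendsto_inv_atTop_nhds_zero_nat.const_mul (2/ρ)
        rw [mul_zero] at h
        apply h.congr
        intro m
        rw [div_eq_mul_inv, div_eq_mul_inv, mul_inv]
        ring
      have t2 : Tendsto (fun m : ℕ => (((m:ℝ)+1)*((m:ℝ)+1))*K^m) atTop (𝓝 0) := by
        have h2 := tendsto_pow_const_mul_const_pow_of_lt_one 2 hK0.le hK1
        have h1 := tendsto_pow_const_mul_const_pow_of_lt_one 1 hK0.le hK1
        have h0 := tendsto_pow_atTop_nhds_zero_of_lt_one hK0.le hK1
        have hsum := (h2.add (h1.const_mul 2)).add h0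
        norm_num at hsum
        apply hsum.congr
        intro m
        ring
      have t3 : Tendsto (fun m : ℕ => L^m) atTop (𝓝 0) :=
        tendsto_pow_atTop_nhds_zero_of_lt_one hL0.le hL1
      have tsum := (t1.add t2).add t3
      norm_num at tsum
      have hcomp := tsum.comp (tendsto_sub_atTop_nat 1)
      apply hcomp.congr'
      filter_upwards [eventually_ge_atTop 1] with N hN
      have hcast : ((N-1:ℕ):ℝ) + 1 = (N:ℝ) := by
        have : ((N-1:ℕ):ℝ) = (N:ℝ) - 1 := by
          push_cast [Nat.cast_sub hN]; ring
        rw [this]; ring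
      simp only [Function.comp_apply]
      rw [hcast]
    apply squeeze_zero' ?_ ?_ g0
    · exact Filter.Eventually.of_forall (fun N => Finset.sum_nonneg fun k hk =>
        pmf_nonneg hρ0 (Finset.mem_Icc.mp (Finset.mem_filter.mp hk).1).1)
    filter_upwards [eventually_ge_atTop (max 2 (⌈X⌉₊ + 2))] with N hN
    obtain ⟨n, hn_def⟩ : ∃ t, t = N - 1 := ⟨_, rfl⟩
    have hN2 : 2 ≤ N := le_trans (le_max_left _ _) hN
    have hNn : N = n + 1 := by omega
    have hn1 : 1 ≤ n := by omega
    have hNr : (N:ℝ) = (n:ℝ) + 1 := by rw [hNn]; push_cast; ring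
    have hnr0 : (0:ℝ) < (n:ℝ) := by exact_mod_cast hn1
    have hNr0 : (0:ℝ) < (N:ℝ) := by rw [hNr]; linarith
    have hXn : X + 1 ≤ (n:ℝ) := by
      have h1 : ⌈X⌉₊ + 2 ≤ N := le_trans (le_max_right _ _) hN
      have h2 : ⌈X⌉₊ + 1 ≤ n := by omega
      have h3 : ((⌈X⌉₊:ℕ):ℝ) + 1 ≤ (n:ℝ) := by exact_mod_cast h2
      linarith [Nat.le_ceil X]
    have hC2 : a * (N:ℝ) < (n:ℝ) := by
      have h1 : a/(1-a) < (n:ℝ) := by linarith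
      have h2 : a < (n:ℝ)*(1-a) := by rwa [div_lt_iff₀ (by linarith : (0:ℝ) < 1-a)] at h1
      rw [hNr]
      linarith [h2]
    have hC3 : a ≤ (n:ℝ) * (ε'/2) := by
      have h1 : 2*a/ε' ≤ (n:ℝ) := by linarith
      have h2 : 2*a ≤ (n:ℝ)*ε' := by rwa [div_le_iff₀ hε'] at h1
      linarith
    have hC4 : (1:ℝ) ≤ (n:ℝ) * (ε'/2) := by
      have h1 : 2/ε' ≤ (n:ℝ) := by linarith
      have h2 : 2 ≤ (n:ℝ)*ε' := by rwa [div_le_iff₀ hε'] at h1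
      linarith
    have hb0 : 0 < b := by linarith
    have hC6 : (1:ℝ) < b * (N:ℝ) := by
      have h1 : 2/b ≤ (n:ℝ) := by linarith
      have h2 : 2 ≤ (n:ℝ)*b := by rwa [div_le_iff₀ hb0] at h1
      rw [hNr]
      linarith [h2, hb0]
    obtain ⟨M, hM_def⟩ : ∃ t, t = ⌊a * (N:ℝ)⌋₊ := ⟨_, rfl⟩
    have hMa : (M:ℝ) ≤ a*(N:ℝ) := by rw [hM_def]; exact Nat.floor_le (by positivity)
    have hMn : M < n := by
      rw [hM_def]
      exact (Nat.floor_lt (by positivity)).mpr hC2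
    have hMN : M < N := by omega
    obtain ⟨m₁, hm₁_def⟩ : ∃ t, t = min (⌊δ * (n:ℝ)⌋₊) M := ⟨_, rfl⟩
    have hm₁M : m₁ ≤ M := by rw [hm₁_def]; exact min_le_right _ _
    obtain ⟨b', hb'_def⟩ : ∃ t, t = ⌈b * (N:ℝ)⌉₊ := ⟨_, rfl⟩
    have hb'N : b' ≤ N := by
      rw [hb'_def]
      apply Nat.ceil_le.mpr
      have := mul_le_mul_of_nonneg_right hb1.le hNr0.le
      linarith
    have hb'2 : 2 ≤ b' := by
      have : 1 < b' := by
        rw [hb'_def]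
        exact Nat.lt_ceil.mpr (by exact_mod_cast hC6)
      omega
    have hbb' : b * (N:ℝ) ≤ (b':ℝ) := by rw [hb'_def]; exact Nat.le_ceil _
    have hsplit : (Finset.Icc 1 N).filter (fun k : ℕ => ε' ≤ |(k:ℝ)/N - α|)
        = Finset.Icc 1 M ∪ Finset.Icc b' N := by
      ext k
      simp only [Finset.mem_filter, Finset.mem_Icc, Finset.mem_union]
      constructor
      · rintro ⟨⟨hk1, hkN⟩, habs⟩
        rcases le_abs.mp habs with h | h
        · right
          refine ⟨?_, hkN⟩
          rw [hb'_def]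
          apply Nat.ceil_le.mpr
          rw [← le_div_iff₀ hNr0]
          rw [hb_def]
          linarith
        · left
          rw [hM_def]
          refine ⟨hk1, Nat.le_floor ?_⟩
          rw [← div_le_iff₀ hNr0, ha_def]
          linarith
      · rintro (⟨hk1, hkM⟩ | ⟨hb'k, hkN⟩)
        · refine ⟨⟨hk1, by omega⟩, ?_⟩
          have hk : (k:ℝ) ≤ a*N := le_trans (by exact_mod_cast Nat.cast_le.mpr hkM) hMa
          have hka : (k:ℝ)/N ≤ a := (div_le_iff₀ hNr0).mpr hk
          rw [le_abs]
          right
          rw [ha_def] at hka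
          linarith
        · have hk1 : 1 ≤ k := by omega
          refine ⟨⟨hk1, hkN⟩, ?_⟩
          have h1 : b*N ≤ (k:ℝ) := le_trans hbb' (by exact_mod_cast hb'k)
          have h2 : b ≤ (k:ℝ)/N := (le_div_iff₀ hNr0).mpr h1
          rw [le_abs]
          left
          rw [hb_def] at h2
          linarith
    have hdisj : Disjoint (Finset.Icc 1 M) (Finset.Icc b' N) := by
      rw [Finset.disjoint_left]
      intro k hk1 hk2
      have h1 : k ≤ M := (Finset.mem_Icc.mp hk1).2
      have h2 : b' ≤ k := (Finset.mem_Icc.mp hk2).1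
      have h3 : (k:ℝ) ≤ a*N := le_trans (by exact_mod_cast Nat.cast_le.mpr h1) hMa
      have h4 : b*N ≤ (k:ℝ) := le_trans hbb' (by exact_mod_cast h2)
      have hab : a < b := by rw [ha_def, hb_def]; linarith
      have := mul_lt_mul_of_pos_right hab hNr0
      linarith
    rw [hsplit, Finset.sum_union hdisj]
    have hlow : ∑ k ∈ Finset.Icc 1 M, pmfP ρ N k ≤ 2/(ρ*(n:ℝ)) + (N:ℝ)*((N:ℝ)*K^n) := by
      have htel : ∑ k ∈ Finset.Icc 1 M, pmfP ρ N k = tailP ρ N 1 - tailP ρ N (M+1) := by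
        have h := sum_telescope_Icc (tailP ρ N) 1 M (by omega)
        simp only [pmfP]
        exact h
      have h1 : tailP ρ N 1 = 1 := by
        simp only [tailP]
        rw [if_pos (by omega : 1 ≤ N), Finset.sum_range_one, rfun_zero]
        norm_num
      have hM1N : M + 1 ≤ N := by omega
      have hM1 : tailP ρ N (M+1) = (∑ i ∈ Finset.range (M+1), rfun ρ N i)⁻¹ := by
        simp only [tailP]
        rw [if_pos hM1N]
      rw [htel, h1, hM1]
      obtain ⟨S, hS_def⟩ : ∃ t, t = ∑ i ∈ Finset.range (M+1), rfun ρ N i := ⟨_, rfl⟩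
      rw [← hS_def]
      have hS1 : 1 ≤ S := by
        rw [hS_def]
        exact sum_rfun_ge_one hρ0 N (M+1) (by omega)
      have hsplitS : S = 1 + ∑ i ∈ Finset.range M, rfun ρ N (i+1) := by
        rw [hS_def, Finset.sum_range_succ', rfun_zero]
        ring
      have hmm : (∑ i ∈ Finset.range M, rfun ρ N (i+1))
          = (∑ i ∈ Finset.Ico 0 m₁, rfun ρ N (i+1))
            + ∑ i ∈ Finset.Ico m₁ M, rfun ρ N (i+1) := by
        rw [Finset.range_eq_Ico]
        exact (Finset.sum_Ico_consecutive _ (Nat.zero_le m₁) hm₁M).symm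
      have hA : (∑ i ∈ Finset.Ico 0 m₁, rfun ρ N (i+1)) ≤ 2/(ρ*(n:ℝ)) := by
        have hple : ∀ i ∈ Finset.Ico 0 m₁, rfun ρ N (i+1) ≤ (ρ*(n:ℝ))⁻¹ * (2⁻¹:ℝ)^i := by
          intro i hi
          have hi' : i < m₁ := (Finset.mem_Ico.mp hi).2
          have h2 : (m₁:ℝ) ≤ δ * (n:ℝ) := by
            have hmf : m₁ ≤ ⌊δ * (n:ℝ)⌋₊ := by rw [hm₁_def]; exact min_le_left _ _
            calc (m₁:ℝ) ≤ (⌊δ * (n:ℝ)⌋₊:ℝ) := by exact_mod_cast hmf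
              _ ≤ δ * n := Nat.floor_le (mul_nonneg hδ0.le hnr0.le)
          have h3 : δ * (n:ℝ) ≤ ρ/8 * n := mul_le_mul_of_nonneg_right hδρ hnr0.le
          have hle : ((i+1:ℕ):ℝ) ≤ ρ * (n:ℝ) / 8 := by
            have h4 : ((i+1:ℕ):ℝ) ≤ (m₁:ℝ) := by exact_mod_cast hi'
            push_cast at h4 ⊢
            linarith only [h4, h2, h3]
          have h5 := rfun_regionA hρ0 hρ1 n (i+1) (by omega) hle
          have h6 : rfun ρ N (i+1) = (ρ^(i+1) * ((n.choose (i+1)):ℝ))⁻¹ := by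
            rw [rfun, hn_def]
          rw [h6]
          have h7 : (i+1) - 1 = i := by omega
          rw [h7] at h5
          exact h5
        calc (∑ i ∈ Finset.Ico 0 m₁, rfun ρ N (i+1))
            ≤ ∑ i ∈ Finset.Ico 0 m₁, (ρ*(n:ℝ))⁻¹ * (2⁻¹:ℝ)^i := Finset.sum_le_sum hple
          _ = (ρ*(n:ℝ))⁻¹ * ∑ i ∈ Finset.range m₁, (2⁻¹:ℝ)^i := by
              rw [← Finset.range_eq_Ico, Finset.mul_sum]
          _ ≤ (ρ*(n:ℝ))⁻¹ * 2 := by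
              have hg : ∑ i ∈ Finset.range m₁, (2⁻¹:ℝ)^i ≤ 2 := by
                rw [geom_sum_eq (by norm_num : (2⁻¹:ℝ) ≠ 1) m₁]
                have hp : (0:ℝ) ≤ (2⁻¹:ℝ)^m₁ := by positivity
                have hd : ((2⁻¹:ℝ) - 1) = -(2⁻¹) := by norm_num
                rw [hd, div_neg, div_eq_mul_inv]
                norm_num
                linarith only [hp]
              exact mul_le_mul_of_nonneg_left hg
                (inv_nonneg.mpr (mul_nonneg hρ0.le hnr0.le))
          _ = 2/(ρ*(n:ℝ)) := by
              rw [div_eq_mul_inv]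
              ring
      have hB : (∑ i ∈ Finset.Ico m₁ M, rfun ρ N (i+1)) ≤ (N:ℝ)*((N:ℝ)*K^n) := by
        have hper : ∀ i ∈ Finset.Ico m₁ M, rfun ρ N (i+1) ≤ (N:ℝ)*K^n := by
          intro i hi
          obtain ⟨hi1, hi2⟩ := Finset.mem_Ico.mp hi
          have hfl : ⌊δ * (n:ℝ)⌋₊ ≤ i := by
            rcases le_total (⌊δ * (n:ℝ)⌋₊) M with hle | hle
            · have he : m₁ = ⌊δ * (n:ℝ)⌋₊ := by rw [hm₁_def]; exact min_eq_left hle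
              omega
            · have he : m₁ = M := by rw [hm₁_def]; exact min_eq_right hle
              omega
          have hi1n : i + 1 < n := by omega
          have hreg := rfun_regionB hρ0 (by omega : 0 < i+1) hi1n
          have hδx : δ ≤ ((i+1:ℕ):ℝ)/(n:ℝ) := by
            rw [le_div_iff₀ hnr0]
            have h8 : δ * (n:ℝ) < (⌊δ * (n:ℝ)⌋₊:ℝ) + 1 := Nat.lt_floor_add_one _
            have h9 : ((⌊δ * (n:ℝ)⌋₊:ℝ)) + 1 ≤ (i:ℝ) + 1 := by
              have : (⌊δ * (n:ℝ)⌋₊:ℝ) ≤ (i:ℝ) := by exact_mod_cast hfl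
              linarith only [this]
            push_cast
            linarith only [h8, h9]
          have hxa2 : ((i+1:ℕ):ℝ)/(n:ℝ) ≤ a2 := by
            rw [div_le_iff₀ hnr0]
            have h10 : ((i+1:ℕ):ℝ) ≤ (M:ℝ) := by exact_mod_cast (by omega : i+1 ≤ M)
            have e : a*(N:ℝ) = a*(n:ℝ) + a := by rw [hNr]; ring
            have e2 : a2 * (n:ℝ) = a*(n:ℝ) + (ε'/2)*(n:ℝ) := by
              rw [show a2 = a + ε'/2 from by linarith only [ha2a]]
              ring
            have hC3' : a ≤ (n:ℝ) * (ε'/2) := hC3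
            linarith only [h10, hMa, e, e2, hC3']
          have hfent : fent ρ (((i+1:ℕ):ℝ)/(n:ℝ)) ≤ c := by
            rw [hc_def]
            exact fent_le_max hδ0.le hδx hxa2 (by linarith only [ha2α, hα2])
          have hexp : Real.exp ((n:ℝ) * fent ρ (((i+1:ℕ):ℝ)/(n:ℝ))) ≤ K^n := by
            rw [hK_def, ← Real.exp_nat_mul]
            exact Real.exp_le_exp.mpr (mul_le_mul_of_nonneg_left hfent hnr0.le)
          have h6 : rfun ρ N (i+1) = (ρ^(i+1) * ((n.choose (i+1)):ℝ))⁻¹ := by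
            rw [rfun, hn_def]
          rw [h6]
          calc (ρ^(i+1) * ((n.choose (i+1)):ℝ))⁻¹
              ≤ ((n:ℝ)+1) * Real.exp ((n:ℝ) * fent ρ (((i+1:ℕ):ℝ)/(n:ℝ))) := hreg
            _ ≤ ((n:ℝ)+1) * K^n := by
                apply mul_le_mul_of_nonneg_left hexp (by linarith only [hnr0])
            _ = (N:ℝ) * K^n := by rw [hNr]
        calc (∑ i ∈ Finset.Ico m₁ M, rfun ρ N (i+1))
            ≤ (Finset.Ico m₁ M).card • ((N:ℝ)*K^n) :=
              Finset.sum_le_card_nsmul _ _ _ hper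
          _ = ((M - m₁:ℕ):ℝ) * ((N:ℝ)*K^n) := by
              rw [Nat.card_Ico, nsmul_eq_mul]
          _ ≤ (N:ℝ) * ((N:ℝ)*K^n) := by
              apply mul_le_mul_of_nonneg_right _
                (mul_nonneg hNr0.le (pow_nonneg hK0.le n))
              have hc1 : M - m₁ ≤ N := by omega
              exact_mod_cast hc1
      have hSb : S - 1 ≤ 2/(ρ*(n:ℝ)) + (N:ℝ)*((N:ℝ)*K^n) := by
        rw [hsplitS, hmm]
        linarith only [hA, hB]
      have hSpos : (0:ℝ) < S := by linarith only [hS1]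
      have hne : S ≠ 0 := ne_of_gt hSpos
      have hsq : (0:ℝ) ≤ (S - 1)^2 * S⁻¹ :=
        mul_nonneg (sq_nonneg _) (inv_nonneg.mpr hSpos.le)
      have hexp2 : (S - 1)^2 * S⁻¹ = S - 2 + S⁻¹ := by
        field_simp
        ring
      linarith only [hsq, hexp2, hSb]
    have hup : ∑ k ∈ Finset.Icc b' N, pmfP ρ N k ≤ L^n := by
      have htel : ∑ k ∈ Finset.Icc b' N, pmfP ρ N k
          = tailP ρ N b' - tailP ρ N (N+1) := by
        have h := sum_telescope_Icc (tailP ρ N) b' N (by omega)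
        simp only [pmfP]
        exact h
      have h0 : tailP ρ N (N+1) = 0 := by
        simp only [tailP]
        rw [if_neg (by omega)]
      rw [htel, h0, sub_zero]
      simp only [tailP]
      rw [if_pos hb'N]
      have hj1 : 1 ≤ b' - 1 := by omega
      have hjn : b' - 1 ≤ n := by omega
      have hjb : b' - 1 < b' := by omega
      have hn0 : 0 < n := hn1
      have hjr : ((b'-1:ℕ):ℝ) = (b':ℝ) - 1 := by
        push_cast [Nat.cast_sub (by omega : 1 ≤ b')]
        ring
      have hb2j : b2 ≤ ((b'-1:ℕ):ℝ)/(n:ℝ) := by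
        rw [le_div_iff₀ hnr0, hjr, hb2b]
        have e : b*(N:ℝ) = b*(n:ℝ) + b := by rw [hNr]; ring
        linarith only [hbb', e, hC4, hb0]
      have hj1n : ((b'-1:ℕ):ℝ)/(n:ℝ) ≤ 1 := by
        rw [div_le_one hnr0]
        exact_mod_cast hjn
      have hfb : c' ≤ fent ρ (((b'-1:ℕ):ℝ)/(n:ℝ)) := by
        rw [hc'_def]
        exact fent_right_mono hα1 hfα hb2α hb2j hj1n
      have hrj : Real.exp ((n:ℝ) * c') ≤ rfun ρ N (b'-1) := by
        have h1 := rfun_upper hρ0 (n := n) (j := b'-1) hjn hn0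
        have h2 : Real.exp ((n:ℝ)*c') ≤ Real.exp ((n:ℝ) * fent ρ (((b'-1:ℕ):ℝ)/(n:ℝ))) :=
          Real.exp_le_exp.mpr (mul_le_mul_of_nonneg_left hfb hnr0.le)
        have h3 : rfun ρ N (b'-1) = (ρ^(b'-1) * ((n.choose (b'-1)):ℝ))⁻¹ := by
          rw [rfun, hn_def]
        rw [h3]
        exact le_trans h2 h1
      have hSl : Real.exp ((n:ℝ)*c') ≤ ∑ i ∈ Finset.range b', rfun ρ N i :=
        le_trans hrj (Finset.single_le_sum (fun i _ => rfun_nonneg hρ0 N i)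
          (Finset.mem_range.mpr hjb))
      have hinv : (∑ i ∈ Finset.range b', rfun ρ N i)⁻¹ ≤ (Real.exp ((n:ℝ)*c'))⁻¹ :=
        inv_anti₀ (Real.exp_pos _) hSl
      have heq : (Real.exp ((n:ℝ)*c'))⁻¹ = L^n := by
        rw [← Real.exp_neg, hL_def, ← Real.exp_nat_mul]
        congr 1
        ring
      rw [← heq]
      exact hinv
    rw [← hn_def]
    linarith
  intro ε hε
  obtain ⟨ε', hε'def⟩ : ∃ t, t = min ε (min (α/2) ((1-α)/2)) := ⟨_, rfl⟩
  have hε'pos : 0 < ε' := by rw [hε'def]; exact lt_min hε (lt_min (by linarith) (by linarith))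
  have hε'le : ε' ≤ ε := by rw [hε'def]; exact min_le_left _ _
  have hεa' : ε' ≤ α/2 := by
    rw [hε'def]; exact le_trans (min_le_right _ _) (min_le_left _ _)
  have hεb' : ε' ≤ (1-α)/2 := by
    rw [hε'def]; exact le_trans (min_le_right _ _) (min_le_right _ _)
  have hmain := main ε' hε'pos hεa' hεb'
  apply squeeze_zero' (Filter.Eventually.of_forall ?_) (Filter.Eventually.of_forall ?_) hmain
  · intro N
    apply Finset.sum_nonneg
    intro k hk
    exact pmf_nonneg hρ0 (Finset.mem_Icc.mp (Finset.mem_filter.mp hk).1).1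
  · intro N
    apply Finset.sum_le_sum_of_subset_of_nonneg
    · intro k hk
      simp only [Finset.mem_filter] at *
      exact ⟨hk.1, le_trans hε'le hk.2⟩
    · intro k hk _
      exact pmf_nonneg hρ0 (Finset.mem_Icc.mp (Finset.mem_filter.mp hk).1).1
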